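/- A binary cubic form f over ℤ_p represents a unit of ℤ_p if and only if f is primitive and, in the case p = 2, f(x,y) is not congruent to xy(x+y) modulo 2. -/

import Mathlib

lemma toZMod_eq_zero_iff {p : ℕ} [Fact p.Prime] (z : ℤ_[p]) :
    PadicInt.toZMod z = 0 ↔ (p : ℤ_[p]) ∣ z := by
  rw [← RingHom.mem_ker, PadicInt.ker_toZMod, PadicInt.maximalIdeal_eq_span_p,
    Ideal.mem_span_singleton]

lemma isUnit_iff_toZMod_ne_zero {p : ℕ} [Fact p.Prime] (z : ℤ_[p]) :
    IsUnit z ↔ PadicInt.toZMod z ≠ 0 := by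
  rw [ne_eq, toZMod_eq_zero_iff, ← PadicInt.norm_lt_one_iff_dvd, PadicInt.isUnit_iff]
  constructor
  · intro h; simp [h]
  · intro h
    have := PadicInt.norm_le_one z
    have := lt_or_eq_of_le this
    tauto

lemma zmod2_cubic : ∀ a b c d : ZMod 2, ¬ (a = 0 ∧ b = 0 ∧ c = 0 ∧ d = 0) →
    ¬ (a = 0 ∧ b = 1 ∧ c = 1 ∧ d = 0) →
    ∃ x y : ZMod 2, a * x ^ 3 + b * x ^ 2 * y + c * x * y ^ 2 + d * y ^ 3 ≠ 0 := by decide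

lemma zmod2_excep : ∀ X Y : ZMod 2,
    0 * X ^ 3 + 1 * X ^ 2 * Y + 1 * X * Y ^ 2 + 0 * Y ^ 3 = 0 := by decide

lemma zmod_cubic (p : ℕ) [Fact p.Prime] (a b c d : ZMod p)
    (h1 : ¬ (a = 0 ∧ b = 0 ∧ c = 0 ∧ d = 0))
    (h2 : p = 2 → ¬ (a = 0 ∧ b = 1 ∧ c = 1 ∧ d = 0)) :
    ∃ x y : ZMod p, a * x ^ 3 + b * x ^ 2 * y + c * x * y ^ 2 + d * y ^ 3 ≠ 0 := by
  rcases eq_or_ne p 2 with hp | hp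
  · subst hp
    exact zmod2_cubic a b c d h1 (h2 rfl)
  · have hodd : ((2 : ZMod p)) ≠ 0 := by
      intro h
      have h2' : ((2 : ℕ) : ZMod p) = 0 := by exact_mod_cast h
      rw [ZMod.natCast_eq_zero_iff] at h2'
      have := (Nat.prime_dvd_prime_iff_eq (Fact.out) Nat.prime_two).mp h2'
      exact hp this
    by_cases ha : a ≠ 0
    · exact ⟨1, 0, by simpa using ha⟩
    by_cases hd : d ≠ 0
    · exact ⟨0, 1, by simpa using hd⟩
    push_neg at ha hd
    by_cases hbc : b + c ≠ 0
    · exact ⟨1, 1, by simpa [ha, hd] using hbc⟩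
    by_cases hcb : c - b ≠ 0
    · refine ⟨1, -1, ?_⟩
      simpa [ha, hd, sub_eq_add_neg] using fun h => hcb (by linear_combination h)
    push_neg at hbc hcb
    exfalso
    apply h1
    have hc : c = 0 := by
      have : (2 : ZMod p) * c = 0 := by linear_combination hbc + hcb
      rcases mul_eq_zero.mp this with h | h
      · exact absurd h hodd
      · exact h
    have hb : b = 0 := by linear_combination hbc - hc
    exact ⟨ha, hb, hc, hd⟩

/-- A binary cubic form `f = ax³ + bx²y + cxy² + dy³` over `ℤ_p` represents a unit of
`ℤ_p` if and only if `f` is primitive (not all coefficients in `pℤ_p`) and, in case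
`p = 2`, `f(x,y)` is not congruent to `xy(x+y) = x²y + xy²` modulo `2`. -/
theorem stmt_2 (p : ℕ) [Fact p.Prime] (a b c d : ℤ_[p]) :
    (∃ x y : ℤ_[p], IsUnit (a * x ^ 3 + b * x ^ 2 * y + c * x * y ^ 2 + d * y ^ 3)) ↔
      (¬ ((p : ℤ_[p]) ∣ a ∧ (p : ℤ_[p]) ∣ b ∧ (p : ℤ_[p]) ∣ c ∧ (p : ℤ_[p]) ∣ d) ∧
        (p = 2 → ¬ ((2 : ℤ_[p]) ∣ a ∧ (2 : ℤ_[p]) ∣ (b - 1) ∧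
          (2 : ℤ_[p]) ∣ (c - 1) ∧ (2 : ℤ_[p]) ∣ d))) := by
  set φ := (PadicInt.toZMod : ℤ_[p] →+* ZMod p) with hφ
  constructor
  · rintro ⟨x, y, hu⟩
    rw [isUnit_iff_toZMod_ne_zero] at hu
    constructor
    · rintro ⟨ha, hb, hc, hd⟩
      apply hu
      rw [← toZMod_eq_zero_iff] at ha hb hc hd
      simp only [map_add, map_mul, map_pow, ha, hb, hc, hd]
      ring
    · rintro hp2 ⟨ha, hb, hc, hd⟩
      subst hp2
      apply hu
      have hp : ((2 : ℕ) : ℤ_[2]) = (2 : ℤ_[2]) := by norm_cast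
      rw [← hp] at ha hb hc hd
      rw [← toZMod_eq_zero_iff] at ha hb hc hd
      have hb' : φ b = 1 := by
        have := hb; rw [map_sub, map_one, sub_eq_zero] at this; exact this
      have hc' : φ c = 1 := by
        have := hc; rw [map_sub, map_one, sub_eq_zero] at this; exact this
      rw [hφ] at hb' hc'
      simp only [map_add, map_mul, map_pow, ha, hb', hc', hd]
      exact zmod2_excep (φ x) (φ y)
  · rintro ⟨h1, h2⟩
    have hprim : ¬ (φ a = 0 ∧ φ b = 0 ∧ φ c = 0 ∧ φ d = 0) := by
      simp only [hφ, toZMod_eq_zero_iff]; exact h1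
    have hexc : p = 2 → ¬ (φ a = 0 ∧ φ b = 1 ∧ φ c = 1 ∧ φ d = 0) := by
      intro hp2
      subst hp2
      rintro ⟨ha, hb, hc, hd⟩
      apply h2 rfl
      have hp : ((2 : ℕ) : ℤ_[2]) = (2 : ℤ_[2]) := by norm_cast
      rw [← hp]
      simp only [← toZMod_eq_zero_iff]
      exact ⟨ha, by rw [map_sub, map_one, hb, sub_self], by rw [map_sub, map_one, hc, sub_self], hd⟩
    obtain ⟨X, Y, hXY⟩ := zmod_cubic p (φ a) (φ b) (φ c) (φ d) hprim hexc
    refine ⟨(X.val : ℤ_[p]), (Y.val : ℤ_[p]), ?_⟩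
    rw [isUnit_iff_toZMod_ne_zero]
    have hX : φ ((X.val : ℕ) : ℤ_[p]) = X := by
      rw [map_natCast, ZMod.natCast_val, ZMod.cast_id]
    have hY : φ ((Y.val : ℕ) : ℤ_[p]) = Y := by
      rw [map_natCast, ZMod.natCast_val, ZMod.cast_id]
    rw [hφ] at hX hY hXY
    simpa only [map_add, map_mul, map_pow, hX, hY] using hXY
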